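/- Let A = A0 + A1ε ∈ DQ^{p×q} and B = B0 + B1ε ∈ DQ^{p×r}. Set A2 = A1·L_{A0}, B2 = B1 − A1·A0†·B0, C11 = R_{A0}·B2, and A3 = R_{A0}·A2, and assume R_{A0}·B0 = 0 and R_{A3}·C11 = 0. Then a dual quaternion matrix X = X0 + X1ε ∈ DQ^{q×r} satisfies AX = B if and only if there exist quaternion matrices U1, U2 of appropriate sizes such that, with U = A3†·C11 + L_{A3}·U2, one has X0 = A0†·B0 + L_{A0}·U and X1 = A0†·(B2 − A2·U) + L_{A0}·U1. -/
import Mathlib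


open Matrix

/-- Quaternion matrices of size `p × q`. -/
abbrev QM (p q : ℕ) := Matrix (Fin p) (Fin q) (Quaternion ℝ)

/-- `Ad` is a Moore–Penrose inverse of the quaternion matrix `A`. -/
def IsMP {p q : ℕ} (A : QM p q) (Ad : QM q p) : Prop :=
  A * Ad * A = A ∧ Ad * A * Ad = Ad ∧ (A * Ad)ᴴ = A * Ad ∧ (Ad * A)ᴴ = Ad * A

/-- The dual quaternion matrix `A0 + A1 ε`, realized as a matrix over the
dual numbers (dual quaternions) `DualNumber (Quaternion ℝ)`. -/
noncomputable def dm {p q : ℕ} (A0 A1 : QM p q) :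
    Matrix (Fin p) (Fin q) (DualNumber (Quaternion ℝ)) :=
  A0.map TrivSqZeroExt.inl + A1.map TrivSqZeroExt.inr

/-- The rank of a quaternion matrix: the dimension (over `ℍ`) of the left
`ℍ`-submodule spanned by its rows. -/
noncomputable def qrank {m n : Type*} (A : Matrix m n (Quaternion ℝ)) : ℕ :=
  Module.finrank (Quaternion ℝ)
    (Submodule.span (Quaternion ℝ) (Set.range (fun i : m => fun j : n => A i j)))

lemma dm_fst {p q : ℕ} (A0 A1 : QM p q) (i j) : (dm A0 A1 i j).fst = A0 i j := by
  simp [dm]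

lemma dm_snd {p q : ℕ} (A0 A1 : QM p q) (i j) : (dm A0 A1 i j).snd = A1 i j := by
  simp [dm]

lemma dm_eq_iff {p q : ℕ} (A0 A1 B0 B1 : QM p q) : dm A0 A1 = dm B0 B1 ↔ A0 = B0 ∧ A1 = B1 := by
  constructor
  · intro h
    constructor <;> (apply Matrix.ext; intro i j)
    · rw [← dm_fst A0 A1, h, dm_fst]
    · rw [← dm_snd A0 A1, h, dm_snd]
  · rintro ⟨rfl, rfl⟩; rfl

lemma dm_mul {p q r : ℕ} (A0 A1 : QM p q) (X0 X1 : QM q r) :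
    dm A0 A1 * dm X0 X1 = dm (A0 * X0) (A0 * X1 + A1 * X0) := by
  apply Matrix.ext; intro i j
  apply TrivSqZeroExt.ext
  · simp [Matrix.mul_apply, dm_fst, dm_snd, TrivSqZeroExt.fst_sum, TrivSqZeroExt.fst_mul]
  · simp [Matrix.mul_apply, dm_fst, dm_snd, TrivSqZeroExt.snd_sum, TrivSqZeroExt.snd_mul,
      Finset.sum_add_distrib, add_comm, mul_comm, MulOpposite.smul_eq_mul_unop, smul_eq_mul]

/-- under the solvability conditions, `X = X0 + X1 ε` solves
`A X = B` iff it has the displayed form. -/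
theorem stmt9 {p q r : ℕ}
    (A0 A1 : QM p q) (B0 B1 : QM p r)
    (A0d : QM q p) (hA0d : IsMP A0 A0d)
    (A2 : QM p q) (hA2 : A2 = A1 * (1 - A0d * A0))
    (B2 : QM p r) (hB2 : B2 = B1 - A1 * A0d * B0)
    (C11 : QM p r) (hC11 : C11 = (1 - A0 * A0d) * B2)
    (A3 : QM p q) (hA3 : A3 = (1 - A0 * A0d) * A2)
    (A3d : QM q p) (hA3d : IsMP A3 A3d)
    (hcond1 : (1 - A0 * A0d) * B0 = 0)
    (hcond2 : (1 - A3 * A3d) * C11 = 0)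
    (X0 X1 : QM q r) :
    dm A0 A1 * dm X0 X1 = dm B0 B1 ↔
      ∃ (U1 U2 : QM q r) (U : QM q r),
        U = A3d * C11 + (1 - A3d * A3) * U2 ∧
        X0 = A0d * B0 + (1 - A0d * A0) * U ∧
        X1 = A0d * (B2 - A2 * U) + (1 - A0d * A0) * U1 := by
  obtain ⟨e1, -, -, -⟩ := hA0d
  obtain ⟨f1, -, -, -⟩ := hA3d
  have hR0B0 : A0 * A0d * B0 = B0 := by
    have := hcond1
    simp only [Matrix.sub_mul, Matrix.one_mul, sub_eq_zero] at this
    exact this.symm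
  have hC2 : A3 * A3d * C11 = C11 := by
    have := hcond2
    simp only [Matrix.sub_mul, Matrix.one_mul, sub_eq_zero] at this
    exact this.symm
  rw [dm_mul, dm_eq_iff]
  constructor
  · rintro ⟨h0, h1⟩
    have hA3X0 : A3 * X0 = C11 := by
      rw [hA3, hA2, hC11, hB2, ← h0, ← h1]
      simp only [Matrix.mul_sub, Matrix.sub_mul, Matrix.mul_add, Matrix.add_mul,
        Matrix.mul_one, Matrix.one_mul, ← Matrix.mul_assoc, e1]
      abel
    have hUX0 : A3d * C11 + (1 - A3d * A3) * X0 = X0 := by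
      rw [← hA3X0]
      simp only [Matrix.sub_mul, Matrix.one_mul, ← Matrix.mul_assoc]
      abel
    refine ⟨X1, X0, A3d * C11 + (1 - A3d * A3) * X0, rfl, ?_, ?_⟩
    · rw [hUX0, ← h0]
      simp only [Matrix.mul_sub, Matrix.sub_mul, Matrix.mul_add, Matrix.add_mul,
        Matrix.mul_one, Matrix.one_mul, ← Matrix.mul_assoc]
      abel
    · rw [hUX0, hB2, hA2, ← hR0B0, ← h0, ← h1]
      simp only [Matrix.mul_sub, Matrix.sub_mul, Matrix.mul_add, Matrix.add_mul,
        Matrix.mul_one, Matrix.one_mul, ← Matrix.mul_assoc, e1]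
      abel
  · rintro ⟨U1, U2, U, hU, hX0, hX1⟩
    constructor
    · rw [hX0]
      simp only [Matrix.mul_sub, Matrix.sub_mul, Matrix.mul_add, Matrix.add_mul,
        Matrix.mul_one, Matrix.one_mul, ← Matrix.mul_assoc, e1, hR0B0]
      abel
    · have hA3U : A3 * U = C11 := by
        rw [hU]
        simp only [Matrix.mul_sub, Matrix.sub_mul, Matrix.mul_add, Matrix.add_mul,
          Matrix.mul_one, Matrix.one_mul, ← Matrix.mul_assoc, f1, hC2]
        abel
      have key : A0 * X1 + A1 * X0 = A0 * A0d * B2 + A3 * U + A1 * A0d * B0 := by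
        rw [hX0, hX1, hA3, hA2]
        simp only [Matrix.mul_sub, Matrix.sub_mul, Matrix.mul_add, Matrix.add_mul,
          Matrix.mul_one, Matrix.one_mul, ← Matrix.mul_assoc, e1]
        abel
      rw [key, hA3U, hC11, hB2]
      simp only [Matrix.mul_sub, Matrix.sub_mul, Matrix.mul_add, Matrix.add_mul,
        Matrix.mul_one, Matrix.one_mul, ← Matrix.mul_assoc]
      abel
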